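/- Let (X_α)_{α ∈ A} be a family of topological spaces, X := ∏_{α ∈ A} X_α with the product topology, and Y a topological space. For each α ∈ A let K_α ⊆ X_α be a subset, set K := ∏_{α ∈ A} K_α, let W ⊆ Y be a subset and f : X → Y a map. Suppose that for every finite subset F ⊆ A the set Σ_F(K) is not contained in f⁻¹(W), where Σ_F(K) denotes the set of all y = (y_α)_{α ∈ A} ∈ X for which Supp_K(y) := {α ∈ A : y_α ∉ K_α} is finite and disjoint from F. Then there exists a sequence (xⁿ)_{n ∈ ℕ} in X such that for every n: (a) Supp_K(xⁿ) is finite; (b) Supp_K(xᵐ) ∩ Supp_K(xˡ) = ∅ whenever m ≠ l; and (c) f(xⁿ) ∉ W. -/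
import Mathlib

noncomputable def auxS {A : Type*} [DecidableEq A] (g : Finset A → Finset A) : ℕ → Finset A
  | n => (Finset.range n).attach.biUnion (fun m => g (auxS g m.1))
termination_by n => n
decreasing_by exact Finset.mem_range.mp m.2

theorem exists_sequence_with_disjoint_supports
    {A : Type*} {X : A → Type*} [∀ α, TopologicalSpace (X α)]
    {Y : Type*} [TopologicalSpace Y]
    (K : ∀ α, Set (X α)) (W : Set Y) (f : (∀ α, X α) → Y)
    (h : ∀ F : Finset A, ∃ y : ∀ α, X α,
      {α | y α ∉ K α}.Finite ∧ {α | y α ∉ K α} ∩ (F : Set A) = ∅ ∧ f y ∉ W) :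
    ∃ x : ℕ → ∀ α, X α,
      (∀ n, {α | x n α ∉ K α}.Finite) ∧
      (∀ m l, m ≠ l → {α | x m α ∉ K α} ∩ {α | x l α ∉ K α} = ∅) ∧
      (∀ n, f (x n) ∉ W) := by
  classical
  choose y hy1 hy2 hy3 using h
  set g : Finset A → Finset A := fun F => (hy1 F).toFinset with hg
  set S : ℕ → Finset A := auxS g with hS
  refine ⟨fun n => y (S n), fun n => hy1 _, ?_, fun n => hy3 _⟩
  have hsupp : ∀ n, {α | y (S n) α ∉ K α} = ↑(g (S n)) := by
    intro n
    ext α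
    simp [hg, Set.Finite.mem_toFinset]
  have hsub : ∀ m n, m < n → (g (S m) : Set A) ⊆ ↑(S n) := by
    intro m n hmn
    intro α hα
    rw [hS, auxS]
    simp only [Finset.coe_biUnion, Finset.mem_coe, Finset.mem_attach, Set.iUnion_true,
      Set.mem_iUnion]
    exact ⟨⟨m, Finset.mem_range.mpr hmn⟩, hα⟩
  have key : ∀ m n, m < n → {α | y (S m) α ∉ K α} ∩ {α | y (S n) α ∉ K α} = ∅ := by
    intro m n hmn
    have h2 := hy2 (S n)
    apply Set.eq_empty_of_subset_empty
    intro α ⟨h1, h2'⟩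
    rw [← h2]
    refine ⟨h2', ?_⟩
    apply hsub m n hmn
    rw [hsupp m] at h1
    exact h1
  intro m l hml
  rcases lt_or_gt_of_ne hml with hlt | hgt
  · exact key m l hlt
  · rw [Set.inter_comm]; exact key l m hgt
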